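/- Let M be a representation of Q on (V_i) and B = (B_i : V_i → E_i)_{i∈Q0} a family of linear maps. The following are equivalent: (a) for every subrepresentation U of M and every subspace L ⊆ k such that U_i ⊆ ker B_i for all i ∈ Q0 whenever L = 0, one has Σ_{i∈Q0} dim U_i − |α|·dim L ≤ 0 (i.e. the framed pair (M,B) is semi-stable for the stability parameter c_α with value 1 at every vertex of Q and −|α| at the framing vertex); (b) the inequality in (a) is strict for every such pair (U,L) other than ((0)_i,0) and ((V_i)_i,k) (i.e. (M,B) is c_α-stable); (c) no nonzero subrepresentation U of M satisfies U_i ⊆ ker B_i for all i ∈ Q0; (d) for every j ∈ Q0 the linear map V_j → ⊕_q E_{t(q)}, v ↦ (B_{t(q)}(M_q(v)))_q, where q runs over all paths in Q with source j (including the trivial path at j), is injective (i.e. the homomorphism ψ_{M,B} : M → I_β is injective). -/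

import Mathlib

open Module

/-- Paths in a quiver with arrow set `Q1`, source map `src` and target map `tgt`. -/
inductive QPath {Q0 Q1 : Type} (src tgt : Q1 → Q0) : Q0 → Q0 → Type
  | nil (i : Q0) : QPath src tgt i i
  | cons {i : Q0} (a : Q1) (p : QPath src tgt i (src a)) : QPath src tgt i (tgt a)

/-- The composite linear map `M_p` along a path `p`. -/
def pathMap {k Q0 Q1 : Type} [Field k] {src tgt : Q1 → Q0} {V : Q0 → Type}
    [∀ i, AddCommGroup (V i)] [∀ i, Module k (V i)]
    (M : ∀ a : Q1, V (src a) →ₗ[k] V (tgt a)) :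
    {i j : Q0} → QPath src tgt i j → (V i →ₗ[k] V j)
  | _, _, QPath.nil _ => LinearMap.id
  | _, _, QPath.cons a p => (M a).comp (pathMap M p)

/-- Engel–Reineke, dual version: for a framed pair `(M,B)` with `B i : V i →ₗ E i`, the
following are equivalent: (a) `(M,B)` is `c_α`-semi-stable, (b) `(M,B)` is `c_α`-stable,
(c) no nonzero subrepresentation of `M` is contained in the kernels of the `B i`, (d) the
homomorphism `ψ_{M,B} : M → I_β` is injective at every vertex. -/
theorem statement3 {k Q0 Q1 : Type} [Field k] [Fintype Q0] [Fintype Q1] [DecidableEq Q0]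
    (src tgt : Q1 → Q0) [∀ i j, Fintype (QPath src tgt i j)]
    (V : Q0 → Type) [∀ i, AddCommGroup (V i)] [∀ i, Module k (V i)]
    [∀ i, FiniteDimensional k (V i)]
    (E : Q0 → Type) [∀ i, AddCommGroup (E i)] [∀ i, Module k (E i)]
    [∀ i, FiniteDimensional k (E i)]
    (M : ∀ a : Q1, V (src a) →ₗ[k] V (tgt a))
    (B : ∀ i : Q0, V i →ₗ[k] E i) :
    List.TFAE
      [ (∀ (U : ∀ i : Q0, Submodule k (V i)) (L : Submodule k k),
          (∀ a : Q1, ∀ x ∈ U (src a), M a x ∈ U (tgt a)) →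
          (L = ⊥ → ∀ i : Q0, U i ≤ LinearMap.ker (B i)) →
          (∑ i : Q0, (finrank k (U i) : ℤ))
            - (∑ i : Q0, (finrank k (V i) : ℤ)) * (finrank k L : ℤ) ≤ 0),
        (∀ (U : ∀ i : Q0, Submodule k (V i)) (L : Submodule k k),
          (∀ a : Q1, ∀ x ∈ U (src a), M a x ∈ U (tgt a)) →
          (L = ⊥ → ∀ i : Q0, U i ≤ LinearMap.ker (B i)) →
          ¬((∀ i, U i = ⊥) ∧ L = ⊥) → ¬((∀ i, U i = ⊤) ∧ L = ⊤) →
          (∑ i : Q0, (finrank k (U i) : ℤ))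
            - (∑ i : Q0, (finrank k (V i) : ℤ)) * (finrank k L : ℤ) < 0),
        (¬ ∃ U : ∀ i : Q0, Submodule k (V i),
          (∀ a : Q1, ∀ x ∈ U (src a), M a x ∈ U (tgt a)) ∧
          (¬ ∀ i, U i = ⊥) ∧ (∀ i : Q0, U i ≤ LinearMap.ker (B i))),
        (∀ j : Q0, Function.Injective
          (fun v : V j =>
            fun q : Σ i : Q0, QPath src tgt j i => B q.1 (pathMap M q.2 v))) ] := by

  have pathmem : ∀ (U : ∀ i : Q0, Submodule k (V i))
      (_ : ∀ a : Q1, ∀ x ∈ U (src a), M a x ∈ U (tgt a))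
      (j i : Q0) (q : QPath src tgt j i) (v : V j) (_ : v ∈ U j),
      pathMap M q v ∈ U i := by
    intro U hU j i q
    induction q with
    | nil => intro v hv; simpa [pathMap] using hv
    | cons a p ih =>
      intro v hv
      have := ih v hv
      simpa [pathMap] using hU a _ this
  tfae_have 1 → 3 := by
    intro h1
    rintro ⟨U, hsub, hne, hker⟩
    have h := h1 U ⊥ hsub (fun _ => hker)
    simp only [finrank_bot, Nat.cast_zero, mul_zero, sub_zero] at h
    push_neg at hne
    obtain ⟨j, hj⟩ := hne
    have hpos : 0 < (finrank k (U j) : ℤ) := by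
      have := Submodule.one_le_finrank_iff.mpr hj
      exact_mod_cast this
    have hsum : 0 < ∑ i : Q0, (finrank k (U i) : ℤ) := by
      apply Finset.sum_pos' (fun i _ => by positivity) ⟨j, Finset.mem_univ j, hpos⟩
    omega
  tfae_have 3 → 2 := by
    intro h3 U L hsub hker hnb hnt
    rcases eq_bot_or_eq_top L with hL | hL
    · exfalso
      apply h3
      refine ⟨U, hsub, ?_, hker hL⟩
      intro hall
      exact hnb ⟨hall, hL⟩
    · have hL1 : (finrank k L : ℤ) = 1 := by
        rw [hL]; simp [finrank_top]
      rw [hL1, mul_one, sub_neg]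
      have hne : ∃ j, U j ≠ ⊤ := by
        by_contra hc
        push_neg at hc
        exact hnt ⟨hc, hL⟩
      obtain ⟨j, hj⟩ := hne
      apply Finset.sum_lt_sum (fun i _ => by exact_mod_cast Submodule.finrank_le (U i))
      exact ⟨j, Finset.mem_univ j, by exact_mod_cast Submodule.finrank_lt hj⟩
  tfae_have 2 → 1 := by
    intro h2 U L hsub hker
    by_cases hb : (∀ i, U i = ⊥) ∧ L = ⊥
    · have hz : ∀ i : Q0, (finrank k (U i) : ℤ) = 0 := by
        intro i; rw [hb.1 i]; simp
      rw [Finset.sum_congr rfl (fun i _ => hz i), hb.2]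
      simp
    · by_cases ht : (∀ i, U i = ⊤) ∧ L = ⊤
      · have : ∀ i, (finrank k (U i) : ℤ) = (finrank k (V i) : ℤ) := by
          intro i; rw [ht.1 i]; simp [finrank_top]
        rw [Finset.sum_congr rfl (fun i _ => this i), ht.2]
        simp [finrank_top]
      · exact le_of_lt (h2 U L hsub hker hb ht)
  tfae_have 3 → 4 := by
    intro h3 j
    rw [show (fun v : V j => fun q : Σ i : Q0, QPath src tgt j i => B q.1 (pathMap M q.2 v))
        = ⇑(LinearMap.pi (fun q : Σ i : Q0, QPath src tgt j i =>
            (B q.1).comp (pathMap M q.2))) from rfl]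
    rw [← LinearMap.ker_eq_bot]
    by_contra hk
    obtain ⟨v, hv, hv0⟩ := Submodule.exists_mem_ne_zero_of_ne_bot hk
    have hv' : ∀ (i : Q0) (q : QPath src tgt j i), B i (pathMap M q v) = 0 := by
      intro i q
      have := congrFun (LinearMap.mem_ker.mp hv) ⟨i, q⟩
      simpa using this
    apply h3
    refine ⟨fun i => Submodule.span k (Set.range (fun q : QPath src tgt j i =>
        pathMap M q v)), ?_, ?_, ?_⟩
    · intro a x hx
      have : Submodule.map (M a) (Submodule.span k (Set.range
          (fun q : QPath src tgt j (src a) => pathMap M q v)))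
          ≤ Submodule.span k (Set.range (fun q : QPath src tgt j (tgt a) =>
            pathMap M q v)) := by
        rw [Submodule.map_span]
        apply Submodule.span_le.mpr
        rintro y ⟨z, ⟨q, rfl⟩, rfl⟩
        exact Submodule.subset_span ⟨QPath.cons a q, by simp [pathMap]⟩
      exact this ⟨x, hx, rfl⟩
    · intro hall
      have : v ∈ (⊥ : Submodule k (V j)) := by
        rw [← hall j]
        exact Submodule.subset_span ⟨QPath.nil j, by simp [pathMap]⟩
      exact hv0 (by simpa using this)
    · intro i
      apply Submodule.span_le.mpr
      rintro y ⟨q, rfl⟩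
      exact LinearMap.mem_ker.mpr (hv' i q)
  tfae_have 4 → 3 := by
    intro h4
    rintro ⟨U, hsub, hne, hker⟩
    push_neg at hne
    obtain ⟨j, hj⟩ := hne
    obtain ⟨v, hv, hv0⟩ := Submodule.exists_mem_ne_zero_of_ne_bot hj
    apply hv0
    apply h4 j
    funext q
    have h1 : pathMap M q.2 v ∈ U q.1 := pathmem U hsub j q.1 q.2 v hv
    show B q.1 (pathMap M q.2 v) = B q.1 (pathMap M q.2 0)
    rw [map_zero, map_zero]
    exact LinearMap.mem_ker.mp (hker q.1 h1)
  tfae_finish
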